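/- Let E be a finite set, let 𝒥 be a nonempty family of subsets of E, and let S ⊆ E be a set such that S \ J ≠ ∅ for every J ∈ 𝒥. Define J^none := E \ ⋃_{J ∈ 𝒥} J and J^some := E \ (J^none ∪ ⋂_{J ∈ 𝒥} J). Then 2·|S ∩ J^none| + |S ∩ J^some| ≥ 2. -/
import Mathlib


open scoped Classical
open Finset

noncomputable section SparseApprox

/-- ℓ₁ data misfit ‖y - Hx‖₁ = ∑ᵢ |yᵢ - (Hx)ᵢ|. -/
def l1Misfit {n m : ℕ} (H : Matrix (Fin n) (Fin m) ℝ) (y : Fin n → ℝ)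
    (x : Fin m → ℝ) : ℝ :=
  ∑ i, |y i - ∑ j, H i j * x j|

/-- ℓ∞ data misfit ‖y - Hx‖∞ = maxᵢ |yᵢ - (Hx)ᵢ|. -/
def linfMisfit {n m : ℕ} (H : Matrix (Fin n) (Fin m) ℝ) (y : Fin n → ℝ)
    (x : Fin m → ℝ) : ℝ :=
  ⨆ i, |y i - ∑ j, H i j * x j|

/-- `J` is a forbidden support for the ℓ₁ problem: every `x` with support
contained in `J` has ℓ₁ misfit exceeding `α`. -/
def ForbiddenL1 {n m : ℕ} (H : Matrix (Fin n) (Fin m) ℝ) (y : Fin n → ℝ)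
    (α : ℝ) (J : Finset (Fin m)) : Prop :=
  ∀ x : Fin m → ℝ, (∀ j ∉ J, x j = 0) → α < l1Misfit H y x

/-- `J` is a forbidden support for the ℓ∞ problem. -/
def ForbiddenLinf {n m : ℕ} (H : Matrix (Fin n) (Fin m) ℝ) (y : Fin n → ℝ)
    (α : ℝ) (J : Finset (Fin m)) : Prop :=
  ∀ x : Fin m → ℝ, (∀ j ∉ J, x j = 0) → α < linfMisfit H y x

/-- The support of a vector `x`, as a finite set of indices. -/
def suppSet {m : ℕ} (x : Fin m → ℝ) : Finset (Fin m) :=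
  Finset.univ.filter fun j => x j ≠ 0

/-- the purely combinatorial set covering fact behind the
forbidden support family inequalities. -/
theorem set_covering_family_inequality {E : Type*} [Fintype E] [DecidableEq E]
    (𝒥 : Finset (Finset E)) (h𝒥ne : 𝒥.Nonempty)
    (S : Finset E) (hS : ∀ J ∈ 𝒥, (S \ J).Nonempty)
    (Jnone Jsome : Finset E)
    (hnone : Jnone = (Finset.univ.filter fun e => ∃ J ∈ 𝒥, e ∈ J)ᶜ)
    (hsome : Jsome = (Jnone ∪ Finset.univ.filter fun e => ∀ J ∈ 𝒥, e ∈ J)ᶜ) :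
    2 ≤ 2 * (S ∩ Jnone).card + (S ∩ Jsome).card := by
  obtain ⟨J₀, hJ₀⟩ := h𝒥ne
  obtain ⟨e, he⟩ := hS J₀ hJ₀
  rw [Finset.mem_sdiff] at he
  obtain ⟨heS, heJ₀⟩ := he
  have hmemN : ∀ x : E, (¬ ∃ J ∈ 𝒥, x ∈ J) → x ∈ Jnone := by
    intro x hx
    push_neg at hx
    rw [hnone]
    simpa using hx
  have hmemS : ∀ x : E, (∃ J ∈ 𝒥, x ∈ J) → (∃ J ∈ 𝒥, x ∉ J) → x ∈ Jsome := by
    intro x hx1 hx2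
    obtain ⟨J, hJ, hxJ⟩ := hx2
    simp only [hsome, Finset.mem_compl, Finset.mem_union, Finset.mem_filter,
      Finset.mem_univ, true_and, hnone, not_or, not_forall]
    constructor
    · simp [hx1]
    · exact ⟨J, hJ, hxJ⟩
  by_cases h1 : ∃ J ∈ 𝒥, e ∈ J
  · obtain ⟨J₁, hJ₁, heJ₁⟩ := h1
    obtain ⟨f, hf⟩ := hS J₁ hJ₁
    rw [Finset.mem_sdiff] at hf
    obtain ⟨hfS, hfJ₁⟩ := hf
    have hne : f ≠ e := fun h => hfJ₁ (h ▸ heJ₁)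
    by_cases h2 : ∃ J ∈ 𝒥, f ∈ J
    · have heSome : e ∈ S ∩ Jsome :=
        Finset.mem_inter.mpr ⟨heS, hmemS e ⟨J₁, hJ₁, heJ₁⟩ ⟨J₀, hJ₀, heJ₀⟩⟩
      have hfSome : f ∈ S ∩ Jsome :=
        Finset.mem_inter.mpr ⟨hfS, hmemS f h2 ⟨J₁, hJ₁, hfJ₁⟩⟩
      have h2le : 2 ≤ (S ∩ Jsome).card := by
        have : ({f, e} : Finset E) ⊆ S ∩ Jsome := by
          intro x hx
          rcases Finset.mem_insert.mp hx with h | h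
          · exact h ▸ hfSome
          · exact (Finset.mem_singleton.mp h) ▸ heSome
        have := Finset.card_le_card this
        rwa [Finset.card_insert_of_notMem (by simp [hne]), Finset.card_singleton] at this
      omega
    · have : f ∈ S ∩ Jnone := Finset.mem_inter.mpr ⟨hfS, hmemN f h2⟩
      have h1le : 1 ≤ (S ∩ Jnone).card := Finset.card_pos.mpr ⟨f, this⟩
      omega
  · have : e ∈ S ∩ Jnone := Finset.mem_inter.mpr ⟨heS, hmemN e h1⟩
    have h1le : 1 ≤ (S ∩ Jnone).card := Finset.card_pos.mpr ⟨e, this⟩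
    omega
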